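/- The decomposition x = Πᵣ x + (I − Πᵣ) x is orthogonal with respect to the inner product induced by the prior precision matrix: for all x, y ∈ ℝⁿ, (Πᵣ x)ᵀ Γ_pr⁻¹ ((I − Πᵣ) y) = 0. -/

import Mathlib

open Matrix

/-- the decomposition `x = Πᵣ x + (I − Πᵣ) x` is orthogonal with
respect to the inner product induced by the prior precision matrix:
`(Πᵣ x)ᵀ Γ_pr⁻¹ ((I − Πᵣ) y) = 0` for all `x, y`. -/
theorem stmt_10 {n r : ℕ} (hn : 1 ≤ n) (hr1 : 1 ≤ r) (hrn : r ≤ n)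
    (Γpr L : Matrix (Fin n) (Fin n) ℝ)
    (hΓpr : Γpr.PosDef) (hL : IsUnit L.det) (hLL : Γpr = L * Lᵀ)
    (Ψr : Matrix (Fin n) (Fin r) ℝ) (Ψp : Matrix (Fin n) (Fin (n - r)) ℝ)
    (hQ1 : (fromCols Ψr Ψp)ᵀ * fromCols Ψr Ψp = 1)
    (hQ2 : fromCols Ψr Ψp * (fromCols Ψr Ψp)ᵀ = 1)
    (Φr : Matrix (Fin n) (Fin r) ℝ) (hΦr : Φr = L * Ψr)
    (Φp : Matrix (Fin n) (Fin (n - r)) ℝ) (hΦp : Φp = L * Ψp)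
    (Ξr : Matrix (Fin n) (Fin r) ℝ) (hΞr : Ξr = (Lᵀ)⁻¹ * Ψr)
    (Ξp : Matrix (Fin n) (Fin (n - r)) ℝ) (hΞp : Ξp = (Lᵀ)⁻¹ * Ψp)
    (Pir : Matrix (Fin n) (Fin n) ℝ) (hPir : Pir = Φr * Ξrᵀ) :
    ∀ x y : Fin n → ℝ, (Pir *ᵥ x) ⬝ᵥ (Γpr⁻¹ *ᵥ ((1 - Pir) *ᵥ y)) = 0 := by
  have hLdet : IsUnit Lᵀ.det := by rwa [Matrix.det_transpose]
  have hΨ : Ψrᵀ * Ψr = 1 := by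
    rw [transpose_fromCols, fromRows_mul_fromCols, ← fromBlocks_one] at hQ1
    exact (fromBlocks_inj.mp hQ1).1
  have hΓinv : Γpr⁻¹ = (Lᵀ)⁻¹ * L⁻¹ := by rw [hLL, Matrix.mul_inv_rev]
  have hPirT : Pirᵀ = Lᵀ⁻¹ * (Ψr * (Ψrᵀ * Lᵀ)) := by
    rw [hPir, hΦr, hΞr, transpose_mul, transpose_mul, transpose_nonsing_inv,
      transpose_transpose]
    rw [← Matrix.transpose_nonsing_inv]
    simp [Matrix.mul_assoc]
  have h1 : Lᵀ * (Lᵀ⁻¹ * L⁻¹) = L⁻¹ := by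
    rw [← Matrix.mul_assoc, Matrix.mul_nonsing_inv _ hLdet, Matrix.one_mul]
  have h2 : L⁻¹ * (L * Ψr) = Ψr := by
    rw [← Matrix.mul_assoc, Matrix.nonsing_inv_mul _ hL, Matrix.one_mul]
  have h3 : Pirᵀ * Γpr⁻¹ = Lᵀ⁻¹ * (Ψr * (Ψrᵀ * L⁻¹)) := by
    rw [hPirT, hΓinv, Matrix.mul_assoc, Matrix.mul_assoc, Matrix.mul_assoc, h1]
  have h4 : Pirᵀ * (Γpr⁻¹ * Pir) = Lᵀ⁻¹ * (Ψr * (Ψrᵀ * L⁻¹)) := by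
    rw [← Matrix.mul_assoc, h3, hPir, hΦr, hΞr, transpose_mul, transpose_nonsing_inv,
      transpose_transpose]
    simp only [Matrix.mul_assoc]
    rw [← Matrix.mul_assoc L⁻¹ L, Matrix.nonsing_inv_mul _ hL, Matrix.one_mul,
      ← Matrix.mul_assoc Ψrᵀ Ψr, hΨ, Matrix.one_mul]
  have key : Pirᵀ * (Γpr⁻¹ * (1 - Pir)) = 0 := by
    rw [Matrix.mul_sub, Matrix.mul_one, Matrix.mul_sub, h3, h4, sub_self]
  intro x y
  rw [Matrix.mulVec_mulVec, ← Matrix.vecMul_transpose,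
    Matrix.dotProduct_mulVec, Matrix.vecMul_vecMul, key]
  simp
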